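/- Let f(x) = ∑_{n≥0} f_n x^n be the formal power series satisfying f = 1 + 3x·f + 2x²·f², where f_n is the sum of weights of (3,2)-Motzkin paths of length n. Then f(x) = (1 - 3x - √(1 - 6x + x²)) / (4x²), and f_n equals the n-th little Schröder number. -/

import Mathlib

/-- A Motzkin step: up, down, or horizontal. -/
inductive Step | U | D | H
deriving DecidableEq

instance : Fintype Step :=
  ⟨{Step.U, Step.D, Step.H}, fun x => by cases x <;> simp⟩

/-- The height change of one step. -/
def Step.val : Step → ℤ
  | Step.U => 1
  | Step.D => -1
  | Step.H => 0

/-- The weight of a step: up steps weigh `1`, down steps `t`, horizontal steps `k`. -/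
def Step.wt (k t : ℕ) : Step → ℕ
  | Step.U => 1
  | Step.D => t
  | Step.H => k

/-- The height of the path `p` after its first `m` steps. -/
def pathHeight {n : ℕ} (p : Fin n → Step) (m : ℕ) : ℤ :=
  ∑ i ∈ Finset.univ.filter (fun i : Fin n => (i : ℕ) < m), (p i).val

/-- A partial Motzkin path: never goes below the x-axis. -/
def IsPartialMotzkin {n : ℕ} (p : Fin n → Step) : Prop :=
  ∀ m ≤ n, 0 ≤ pathHeight p m

/-- A (complete) Motzkin path: never below the x-axis and ends on the x-axis. -/
def IsMotzkin {n : ℕ} (p : Fin n → Step) : Prop :=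
  IsPartialMotzkin p ∧ pathHeight p n = 0

instance {n : ℕ} (p : Fin n → Step) : Decidable (IsPartialMotzkin p) :=
  Nat.decidableBallLE n _

instance {n : ℕ} (p : Fin n → Step) : Decidable (IsMotzkin p) :=
  inferInstanceAs (Decidable (_ ∧ _))

/-- The weight of a weighted Motzkin path. -/
def pathWt {n : ℕ} (k t : ℕ) (p : Fin n → Step) : ℕ := ∏ i, (p i).wt k t

/-- Sum of the weights of all `(k,t)`-Motzkin paths of length `n`. -/
def motzkinWt (k t n : ℕ) : ℕ :=
  ∑ p ∈ Finset.univ.filter (fun p : Fin n → Step => IsMotzkin p), pathWt k t p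

/-- Sum of the weights of all partial `(k,t)`-Motzkin paths of length `n`
ending at height `h`. -/
def partialWt (k t n h : ℕ) : ℕ :=
  ∑ p ∈ Finset.univ.filter
      (fun p : Fin n → Step => IsPartialMotzkin p ∧ pathHeight p n = (h : ℤ)),
    pathWt k t p

/-- A Schröder step: up `(1,1)`, down `(1,-1)`, or horizontal `(2,0)`. -/
inductive SStep | U | D | H
deriving DecidableEq

/-- The x-length of a Schröder step. -/
def SStep.x : SStep → ℕ
  | SStep.U => 1
  | SStep.D => 1
  | SStep.H => 2

/-- The height change of a Schröder step. -/
def SStep.y : SStep → ℤ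
  | SStep.U => 1
  | SStep.D => -1
  | SStep.H => 0

/-- The total x-length of a Schröder-step word. -/
def sxlen (l : List SStep) : ℕ := (l.map SStep.x).sum

/-- The final height of a Schröder-step word. -/
def sysum (l : List SStep) : ℤ := (l.map SStep.y).sum

/-- A Schröder path of length `2n` with no peak at level one: nonnegative prefix
heights, final height `0`, total x-length `2n`, and no `UD` factor whose peak is
at height `1`. -/
def IsLittleSchroederPath (n : ℕ) (l : List SStep) : Prop :=
  sxlen l = 2 * n ∧ (∀ pre, pre <+: l → 0 ≤ sysum pre) ∧ sysum l = 0 ∧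
    ¬ ∃ p q, l = p ++ SStep.U :: SStep.D :: q ∧ sysum p = 0

/-- The `n`-th little Schröder number (paper's indexing): the number of Schröder paths
of length `2(n+1)` with no peaks at level one. -/
noncomputable def littleSchroeder (n : ℕ) : ℕ :=
  Nat.card {l : List SStep // IsLittleSchroederPath (n + 1) l}

namespace SchroederAux
open SStep Finset List

lemma sysum_nil : sysum [] = 0 := rfl
lemma sysum_cons (a : SStep) (l : List SStep) : sysum (a :: l) = a.y + sysum l := by
  simp [sysum]
lemma sysum_append (l₁ l₂ : List SStep) : sysum (l₁ ++ l₂) = sysum l₁ + sysum l₂ := by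
  simp [sysum]
lemma sxlen_nil : sxlen ([] : List SStep) = 0 := rfl
lemma sxlen_cons (a : SStep) (l : List SStep) : sxlen (a :: l) = a.x + sxlen l := by
  simp [sxlen]
lemma sxlen_append (l₁ l₂ : List SStep) : sxlen (l₁ ++ l₂) = sxlen l₁ + sxlen l₂ := by
  simp [sxlen]

lemma length_le_sxlen (l : List SStep) : l.length ≤ sxlen l := by
  induction l with
  | nil => simp [sxlen]
  | cons a l ih => cases a <;> simp [sxlen_cons, SStep.x] at * <;> omega

lemma sxlen_eq_zero {l : List SStep} (h : sxlen l = 0) : l = [] := by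
  cases l with
  | nil => rfl
  | cons a l => cases a <;> simp [sxlen_cons, SStep.x] at h

/-- A Schröder path (any semilength): nonneg prefixes and ends at 0. -/
def IsPath (l : List SStep) : Prop := (∀ pre, pre <+: l → 0 ≤ sysum pre) ∧ sysum l = 0

lemma even_aux (l : List SStep) : Even ((sxlen l : ℤ) + sysum l) := by
  induction l with
  | nil => simp [sxlen, sysum]
  | cons a l ih =>
    rw [sxlen_cons, sysum_cons]
    rcases ih with ⟨c, hc⟩
    cases a
    · exact ⟨c + 1, by simp only [SStep.x, SStep.y]; push_cast; omega⟩
    · exact ⟨c, by simp only [SStep.x, SStep.y]; push_cast; omega⟩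
    · exact ⟨c + 1, by simp only [SStep.x, SStep.y]; push_cast; omega⟩

lemma IsPath.even_sxlen {l : List SStep} (h : IsPath l) : Even (sxlen l) := by
  have := even_aux l
  rw [h.2, add_zero] at this
  exact_mod_cast this

end SchroederAux

namespace SchroederAux
open SStep Finset List

lemma prefix_append_cases {p A B : List SStep} (h : p <+: A ++ B) :
    p <+: A ∨ ∃ t, t <+: B ∧ p = A ++ t := by
  rcases le_or_gt p.length A.length with hle | hlt
  · exact Or.inl (List.prefix_of_prefix_length_le h (A.prefix_append B) hle)
  · right
    have hAp : A <+: p := List.prefix_of_prefix_length_le (A.prefix_append B) h hlt.le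
    obtain ⟨t, ht⟩ := hAp
    obtain ⟨r, hr⟩ := h
    refine ⟨t, ⟨r, ?_⟩, ht.symm⟩
    have : A ++ (t ++ r) = A ++ B := by rw [← List.append_assoc, ht, hr]
    exact (List.append_cancel_left this)

lemma decomp_len_lt {A B A' B' : List SStep} (hA : IsPath A) (hA' : IsPath A')
    (h : A ++ SStep.D :: B = A' ++ SStep.D :: B') (hlt : A.length < A'.length) : False := by
  have h1 : A ++ [SStep.D] <+: A' ++ SStep.D :: B' := by
    rw [← h]; exact ⟨B, by simp⟩
  have h2 : A ++ [SStep.D] <+: A' :=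
    List.prefix_of_prefix_length_le h1 (A'.prefix_append _) (by simp; omega)
  have h3 := hA'.1 _ h2
  rw [sysum_append, hA.2, sysum_cons, sysum_nil] at h3
  simp [SStep.y] at h3

lemma decomp_unique {A B A' B' : List SStep} (hA : IsPath A) (hA' : IsPath A')
    (h : A ++ SStep.D :: B = A' ++ SStep.D :: B') : A = A' ∧ B = B' := by
  have hlen : A.length = A'.length := by
    rcases Nat.lt_trichotomy A.length A'.length with hlt | heq | hgt
    · exact absurd (decomp_len_lt hA hA' h hlt) (by simp)
    · exact heq
    · exact absurd (decomp_len_lt hA' hA h.symm hgt) (by simp)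
  obtain ⟨h1, h2⟩ := List.append_inj h hlen
  exact ⟨h1, by simpa using h2⟩

lemma take_prefix_sysum {l : List SStep} (hl : IsPath (SStep.U :: l)) (i : ℕ) :
    -1 ≤ sysum (l.take i) := by
  have hpre : (SStep.U :: l.take i) <+: (SStep.U :: l) := by
    rw [List.prefix_cons_iff]; exact Or.inr ⟨_, rfl, l.take_prefix i⟩
  have := hl.1 _ hpre
  rw [sysum_cons] at this
  simp [SStep.y] at this
  omega

lemma exists_decomp {l : List SStep} (hl : IsPath (SStep.U :: l)) :
    ∃ A B, l = A ++ SStep.D :: B ∧ IsPath A ∧ IsPath B := by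
  have htot : sysum l = -1 := by
    have := hl.2; rw [sysum_cons] at this; simp [SStep.y] at this; omega
  have hex : ∃ j, sysum (l.take j) = -1 := ⟨l.length, by simpa using htot⟩
  classical
  let j := Nat.find hex
  have hj : sysum (l.take j) = -1 := Nat.find_spec hex
  have hmin : ∀ i < j, sysum (l.take i) ≠ -1 := fun i hi => Nat.find_min hex hi
  have hnonneg : ∀ i < j, 0 ≤ sysum (l.take i) := fun i hi => by
    have := take_prefix_sysum hl i
    have := hmin i hi
    omega
  have hj1 : 1 ≤ j := by
    rcases Nat.eq_zero_or_pos j with h0 | h1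
    · rw [h0] at hj; simp [sysum_nil] at hj
    · exact h1
  obtain ⟨i, hi⟩ : ∃ i, j = i + 1 := ⟨j - 1, by omega⟩
  have hjle : j ≤ l.length := Nat.find_le (by simpa using htot)
  have hilen : i < l.length := by omega
  have htake : l.take j = l.take i ++ [l[i]] := by
    rw [hi, List.take_succ, List.getElem?_eq_getElem hilen]
    rfl
  have hsum : sysum (l.take i) + (l[i]).y = -1 := by
    have h2 : sysum (l.take i ++ [l[i]]) = -1 := by rw [← htake]; exact hj
    rw [sysum_append, sysum_cons, sysum_nil] at h2
    omega
  have h0 : 0 ≤ sysum (l.take i) := hnonneg i (by omega)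
  have hycases : (l[i]).y = 1 ∨ (l[i]).y = -1 ∨ (l[i]).y = 0 := by
    cases l[i] <;> simp [SStep.y]
  have hy2 : sysum (l.take i) = 0 := by omega
  have hy1 : (l[i]).y = -1 := by omega
  have hD : l[i] = SStep.D := by
    cases hli : l[i]
    · rw [hli] at hy1; simp [SStep.y] at hy1
    · rfl
    · rw [hli] at hy1; simp [SStep.y] at hy1
  have hdec : l = l.take i ++ SStep.D :: l.drop (i + 1) := by
    conv_lhs => rw [← List.take_append_drop i l]
    rw [List.drop_eq_getElem_cons hilen, hD]
  refine ⟨l.take i, l.drop (i + 1), hdec, ⟨?_, hy2⟩, ?_, ?_⟩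
  · intro pre hpre
    have hpl : pre <+: l := hpre.trans (l.take_prefix i)
    have hlen : pre.length ≤ i := by
      have := hpre.length_le
      rw [List.length_take] at this
      omega
    have : pre = l.take pre.length := by
      rw [← List.prefix_iff_eq_take]; exact hpl
    rw [this]
    exact hnonneg _ (by omega)
  · intro pre hpre
    obtain ⟨r, hr⟩ := hpre
    have hwhole : (SStep.U :: (l.take i ++ SStep.D :: pre)) <+: (SStep.U :: l) := by
      refine ⟨r, ?_⟩
      simp only [List.cons_append, List.append_assoc, List.cons_append]
      rw [hr]
      rw [← hdec]
    have := hl.1 _ hwhole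
    rw [sysum_cons, sysum_append, sysum_cons, hy2] at this
    simp [SStep.y] at this
    omega
  · have hsplit : sysum l = sysum (l.take j) + sysum (l.drop j) := by
      rw [← sysum_append, List.take_append_drop]
    rw [htot, hj, hi] at hsplit
    omega
end SchroederAux

namespace SchroederAux
open SStep Finset List

def lists : ℕ → Finset (List SStep)
  | 0 => {[]}
  | (n + 1) => {[]} ∪ (lists n).biUnion (fun l => {SStep.U :: l, SStep.D :: l, SStep.H :: l})

lemma mem_lists (n : ℕ) (l : List SStep) : l ∈ lists n ↔ l.length ≤ n := by
  induction n generalizing l with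
  | zero => simp [lists, List.length_eq_zero_iff]
  | succ n ih =>
    cases l with
    | nil => simp [lists]
    | cons a l =>
      simp only [lists, Finset.mem_union, Finset.mem_biUnion, Finset.mem_insert,
        Finset.mem_singleton, List.length_cons]
      constructor
      · rintro (h | ⟨l', hl', (h | h | h)⟩) <;> simp_all
      · intro h
        exact Or.inr ⟨l, (ih l).mpr (by omega), by cases a <;> simp⟩

def IsS (m : ℕ) (l : List SStep) : Prop := sxlen l = 2 * m ∧ IsPath l

def NoPeak (l : List SStep) : Prop :=
  ¬∃ p q, l = p ++ SStep.U :: SStep.D :: q ∧ sysum p = 0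

open Classical in
noncomputable def S (m : ℕ) : Finset (List SStep) := (lists (2 * m)).filter (fun l => IsS m l)

open Classical in
noncomputable def P (m : ℕ) : Finset (List SStep) :=
  (lists (2 * m)).filter (fun l => IsS m l ∧ NoPeak l)

lemma mem_S {m : ℕ} {l : List SStep} : l ∈ S m ↔ IsS m l := by
  classical
  simp only [S, Finset.mem_filter, mem_lists]
  exact ⟨fun h => h.2, fun h => ⟨h.1 ▸ length_le_sxlen l, h⟩⟩

lemma mem_P {m : ℕ} {l : List SStep} : l ∈ P m ↔ IsS m l ∧ NoPeak l := by
  classical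
  simp only [P, Finset.mem_filter, mem_lists]
  exact ⟨fun h => h.2, fun h => ⟨h.1.1 ▸ length_le_sxlen l, h⟩⟩

lemma isPath_nil : IsPath ([] : List SStep) :=
  ⟨fun pre hpre => by rw [List.prefix_nil.mp hpre]; simp [sysum_nil], rfl⟩

lemma noPeak_nil : NoPeak ([] : List SStep) := by
  rintro ⟨p, q, h, -⟩
  have := congrArg List.length h
  simp at this

lemma isS_nil_iff {l : List SStep} : IsS 0 l ↔ l = [] := by
  constructor
  · exact fun h => sxlen_eq_zero h.1
  · rintro rfl; exact ⟨rfl, isPath_nil⟩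

lemma S_zero : S 0 = {[]} := by
  ext l; simp [mem_S, isS_nil_iff]

lemma P_zero : P 0 = {[]} := by
  ext l
  simp only [mem_P, Finset.mem_singleton]
  constructor
  · exact fun h => isS_nil_iff.mp h.1
  · rintro rfl; exact ⟨isS_nil_iff.mpr rfl, noPeak_nil⟩

lemma isS_cons_H {m : ℕ} {B : List SStep} : IsS (m + 1) (SStep.H :: B) ↔ IsS m B := by
  constructor
  · rintro ⟨hx, hpre, hsum⟩
    refine ⟨by rw [sxlen_cons] at hx; simp [SStep.x] at hx; omega, fun pre hp => ?_, ?_⟩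
    · have := hpre _ (List.prefix_cons_iff.mpr (Or.inr ⟨pre, rfl, hp⟩))
      rwa [sysum_cons, show (SStep.H).y = 0 from rfl, zero_add] at this
    · rw [sysum_cons, show (SStep.H).y = 0 from rfl, zero_add] at hsum; exact hsum
  · rintro ⟨hx, hpre, hsum⟩
    refine ⟨by rw [sxlen_cons]; simp [SStep.x]; omega, fun pre hp => ?_, ?_⟩
    · rcases List.prefix_cons_iff.mp hp with rfl | ⟨t, rfl, ht⟩
      · simp [sysum_nil]
      · rw [sysum_cons, show (SStep.H).y = 0 from rfl, zero_add]; exact hpre _ ht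
    · rw [sysum_cons, show (SStep.H).y = 0 from rfl, zero_add]; exact hsum

lemma isS_UDB {a b : ℕ} {A B : List SStep} (hA : IsS a A) (hB : IsS b B) :
    IsS (a + b + 1) (SStep.U :: (A ++ SStep.D :: B)) := by
  obtain ⟨hax, hapre, hasum⟩ := hA
  obtain ⟨hbx, hbpre, hbsum⟩ := hB
  refine ⟨?_, fun pre hp => ?_, ?_⟩
  · rw [sxlen_cons, sxlen_append, sxlen_cons]
    simp only [SStep.x]; omega
  · rcases List.prefix_cons_iff.mp hp with rfl | ⟨t, rfl, ht⟩
    · simp [sysum_nil]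
    · rw [sysum_cons, show (SStep.U).y = 1 from rfl]
      rcases prefix_append_cases ht with h | ⟨t', ht', rfl⟩
      · have := hapre _ h; omega
      · rcases List.prefix_cons_iff.mp ht' with rfl | ⟨t'', rfl, ht''⟩
        · rw [sysum_append, hasum]; simp [sysum_nil]
        · rw [sysum_append, hasum, sysum_cons, show (SStep.D).y = -1 from rfl]
          have := hbpre _ ht''; omega
  · rw [sysum_cons, sysum_append, sysum_cons, hasum, hbsum]
    simp [SStep.y]

lemma isS_succ_cases {m : ℕ} {l : List SStep} (h : IsS (m + 1) l) :
    (∃ B, l = SStep.H :: B ∧ IsS m B) ∨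
      ∃ a, a ≤ m ∧ ∃ A B, l = SStep.U :: (A ++ SStep.D :: B) ∧ IsS a A ∧ IsS (m - a) B := by
  obtain ⟨hx, hpath⟩ := h
  cases l with
  | nil => simp [sxlen_nil] at hx
  | cons s l =>
    cases s with
    | H => exact Or.inl ⟨l, rfl, isS_cons_H.mp ⟨hx, hpath⟩⟩
    | D =>
      have := hpath.1 [SStep.D] ⟨l, rfl⟩
      simp [sysum_cons, sysum_nil, SStep.y] at this
    | U =>
      obtain ⟨A, B, rfl, hA, hB⟩ := exists_decomp hpath
      have hAeven := hA.even_sxlen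
      obtain ⟨a, ha⟩ : ∃ a, sxlen A = 2 * a := by
        rcases hAeven with ⟨c, hc⟩; exact ⟨c, by omega⟩
      rw [sxlen_cons, sxlen_append, sxlen_cons] at hx
      simp only [SStep.x] at hx
      have ham : a ≤ m := by omega
      refine Or.inr ⟨a, ham, A, B, rfl, ⟨ha, hA⟩, ⟨by omega, hB⟩⟩

lemma noPeak_cons_H {B : List SStep} : NoPeak (SStep.H :: B) ↔ NoPeak B := by
  constructor
  · intro h
    rintro ⟨p, q, rfl, hp⟩
    exact h ⟨SStep.H :: p, q, rfl, by rw [sysum_cons, show (SStep.H).y = 0 from rfl, zero_add]; exact hp⟩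
  · intro h
    rintro ⟨p, q, hpq, hp⟩
    cases p with
    | nil =>
      simp only [List.nil_append] at hpq
      injection hpq with h1 h2
      simp [SStep.H] at h1
    | cons s p =>
      rw [List.cons_append] at hpq
      injection hpq with h1 h2
      subst h1
      rw [sysum_cons, show (SStep.H).y = 0 from rfl, zero_add] at hp
      exact h ⟨p, q, h2, hp⟩

end SchroederAux

namespace SchroederAux
open SStep Finset List

lemma noPeak_UDB {A B : List SStep} (hA : IsPath A) :
    NoPeak (SStep.U :: (A ++ SStep.D :: B)) ↔ A ≠ [] ∧ NoPeak B := by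
  constructor
  · intro h
    constructor
    · rintro rfl
      exact h ⟨[], B, by simp, sysum_nil⟩
    · rintro ⟨p, q, rfl, hp⟩
      refine h ⟨SStep.U :: (A ++ SStep.D :: p), q, by simp, ?_⟩
      rw [sysum_cons, sysum_append, sysum_cons, hA.2, hp]
      simp [SStep.y]
  · rintro ⟨hne, hB⟩ ⟨p, q, hpq, hp⟩
    cases p with
    | nil =>
      simp only [List.nil_append] at hpq
      injection hpq with h1 h2
      cases A with
      | nil => exact hne rfl
      | cons a A' =>
        rw [List.cons_append] at h2
        injection h2 with h3 h4
        subst h3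
        have := hA.1 [SStep.D] ⟨A', rfl⟩
        simp [sysum_cons, sysum_nil, SStep.y] at this
    | cons s p' =>
      injection hpq with h1 h2
      subst h1
      rw [sysum_cons, show (SStep.U).y = 1 from rfl] at hp
      have hp' : sysum p' = -1 := by omega
      rcases le_or_gt p'.length A.length with hle | hlt
      · have hpre : p' <+: A ++ SStep.D :: B := ⟨SStep.U :: SStep.D :: q, h2.symm⟩
        have : p' <+: A := List.prefix_of_prefix_length_le hpre (A.prefix_append _) hle
        have := hA.1 _ this
        omega
      · have hpre1 : A ++ [SStep.D] <+: A ++ SStep.D :: B := ⟨B, by simp⟩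
        have hpre2 : p' <+: A ++ SStep.D :: B := ⟨SStep.U :: SStep.D :: q, h2.symm⟩
        have hAp : A ++ [SStep.D] <+: p' :=
          List.prefix_of_prefix_length_le hpre1 hpre2 (by simp; omega)
        obtain ⟨t, ht⟩ := hAp
        have hpt : p' = A ++ SStep.D :: t := by rw [← ht]; simp
        have hst : sysum t = 0 := by
          rw [hpt, sysum_append, sysum_cons, hA.2] at hp'
          simp [SStep.y] at hp'
          omega
        have hBt : B = t ++ SStep.U :: SStep.D :: q := by
          rw [hpt] at h2
          simpa using h2
        exact hB ⟨t, q, hBt, hst⟩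

lemma S_succ (m : ℕ) :
    S (m + 1) = (S m).image (SStep.H :: ·) ∪
      (Finset.range (m + 1)).biUnion (fun a =>
        ((S a) ×ˢ (S (m - a))).image (fun AB => SStep.U :: (AB.1 ++ SStep.D :: AB.2))) := by
  ext l
  simp only [Finset.mem_union, Finset.mem_image, Finset.mem_biUnion, Finset.mem_range,
    Finset.mem_product, mem_S]
  constructor
  · intro h
    rcases isS_succ_cases h with ⟨B, rfl, hB⟩ | ⟨a, ham, A, B, rfl, hA, hB⟩
    · exact Or.inl ⟨B, hB, rfl⟩
    · exact Or.inr ⟨a, by omega, ⟨A, B⟩, ⟨hA, hB⟩, rfl⟩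
  · rintro (⟨B, hB, rfl⟩ | ⟨a, ha, ⟨A, B⟩, ⟨hA, hB⟩, rfl⟩)
    · exact isS_cons_H.mpr hB
    · have h2 := isS_UDB hA hB
      rwa [show a + (m - a) + 1 = m + 1 by omega] at h2

lemma P_succ (m : ℕ) :
    P (m + 1) = (P m).image (SStep.H :: ·) ∪
      (Finset.Ioc 0 m).biUnion (fun a =>
        ((S a) ×ˢ (P (m - a))).image (fun AB => SStep.U :: (AB.1 ++ SStep.D :: AB.2))) := by
  ext l
  simp only [Finset.mem_union, Finset.mem_image, Finset.mem_biUnion, Finset.mem_Ioc,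
    Finset.mem_product, mem_S, mem_P]
  constructor
  · rintro ⟨h, hnp⟩
    rcases isS_succ_cases h with ⟨B, rfl, hB⟩ | ⟨a, ham, A, B, rfl, hA, hB⟩
    · exact Or.inl ⟨B, ⟨hB, noPeak_cons_H.mp hnp⟩, rfl⟩
    · obtain ⟨hne, hBnp⟩ := (noPeak_UDB hA.2).mp hnp
      have ha1 : 0 < a := by
        rcases Nat.eq_zero_or_pos a with rfl | h1
        · exact absurd (sxlen_eq_zero (by simpa using hA.1)) hne
        · exact h1
      exact Or.inr ⟨a, ⟨ha1, ham⟩, ⟨A, B⟩, ⟨hA, hB, hBnp⟩, rfl⟩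
  · rintro (⟨B, ⟨hB, hBnp⟩, rfl⟩ | ⟨a, ⟨ha1, ham⟩, ⟨A, B⟩, ⟨hA, hB, hBnp⟩, rfl⟩)
    · exact ⟨isS_cons_H.mpr hB, noPeak_cons_H.mpr hBnp⟩
    · dsimp only at hA hB hBnp
      have h2 := isS_UDB hA hB
      rw [show a + (m - a) + 1 = m + 1 by omega] at h2
      refine ⟨h2, (noPeak_UDB hA.2).mpr ⟨?_, hBnp⟩⟩
      rintro rfl
      have h3 := hA.1
      rw [sxlen_nil] at h3
      omega

end SchroederAux

namespace SchroederAux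
open SStep Finset List

noncomputable def rS (m : ℕ) : ℕ := (S m).card
noncomputable def qS (m : ℕ) : ℕ := (P m).card

lemma rS_zero : rS 0 = 1 := by rw [rS, S_zero]; rfl
lemma qS_zero : qS 0 = 1 := by rw [qS, P_zero]; rfl

lemma UDB_injOn {s t : Finset (List SStep)} (hs : ∀ A ∈ s, IsPath A) :
    Set.InjOn (fun AB : List SStep × List SStep => SStep.U :: (AB.1 ++ SStep.D :: AB.2))
      (s ×ˢ t : Finset _) := by
  rintro ⟨A, B⟩ h1 ⟨A', B'⟩ h2 heqn
  simp only [Finset.coe_product, Set.mem_prod, Finset.mem_coe] at h1 h2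
  dsimp only at heqn
  injection heqn with _ h
  obtain ⟨rfl, rfl⟩ := decomp_unique (hs _ h1.1) (hs _ h2.1) h
  rfl

lemma card_S_succ (m : ℕ) :
    rS (m + 1) = rS m + ∑ a ∈ Finset.range (m + 1), rS a * rS (m - a) := by
  rw [rS, S_succ, Finset.card_union_of_disjoint, Finset.card_biUnion]
  · congr 1
    · exact Finset.card_image_of_injective _ (List.cons_injective)
    · refine Finset.sum_congr rfl fun a _ => ?_
      rw [Finset.card_image_of_injOn (UDB_injOn fun A hA => (mem_S.mp hA).2),
        Finset.card_product]
      rfl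
  · -- pairwise disjoint
    intro a _ b _ hab
    rw [Function.onFun, Finset.disjoint_left]
    rintro l hl1 hl2
    obtain ⟨⟨A, B⟩, hAB, rfl⟩ := Finset.mem_image.mp hl1
    obtain ⟨⟨A', B'⟩, hAB', heqn⟩ := Finset.mem_image.mp hl2
    rw [Finset.mem_product] at hAB hAB'
    obtain ⟨hA, hB⟩ := hAB
    obtain ⟨hA', hB'⟩ := hAB'
    dsimp only at heqn hA hB hA' hB'
    injection heqn with _ h
    obtain ⟨rfl, -⟩ := decomp_unique (mem_S.mp hA').2 (mem_S.mp hA).2 h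
    have h1 := (mem_S.mp hA).1
    have h2 := (mem_S.mp hA').1
    omega
  · -- disjoint H-image vs biUnion
    rw [Finset.disjoint_left]
    rintro l hl1 hl2
    obtain ⟨B, _, rfl⟩ := Finset.mem_image.mp hl1
    obtain ⟨a, _, hl3⟩ := Finset.mem_biUnion.mp hl2
    obtain ⟨⟨A', B'⟩, _, heqn⟩ := Finset.mem_image.mp hl3
    simp at heqn

lemma card_P_succ (m : ℕ) :
    qS (m + 1) = qS m + ∑ a ∈ Finset.Ioc 0 m, rS a * qS (m - a) := by
  rw [qS, P_succ, Finset.card_union_of_disjoint, Finset.card_biUnion]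
  · congr 1
    · exact Finset.card_image_of_injective _ (List.cons_injective)
    · refine Finset.sum_congr rfl fun a _ => ?_
      rw [Finset.card_image_of_injOn (UDB_injOn fun A hA => (mem_S.mp hA).2),
        Finset.card_product]
      rfl
  · intro a _ b _ hab
    rw [Function.onFun, Finset.disjoint_left]
    rintro l hl1 hl2
    obtain ⟨⟨A, B⟩, hAB, rfl⟩ := Finset.mem_image.mp hl1
    obtain ⟨⟨A', B'⟩, hAB', heqn⟩ := Finset.mem_image.mp hl2
    rw [Finset.mem_product] at hAB hAB'
    obtain ⟨hA, hB⟩ := hAB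
    obtain ⟨hA', hB'⟩ := hAB'
    dsimp only at heqn hA hB hA' hB'
    injection heqn with _ h
    obtain ⟨rfl, -⟩ := decomp_unique (mem_S.mp hA').2 (mem_S.mp hA).2 h
    have h1 := (mem_S.mp hA).1
    have h2 := (mem_S.mp hA').1
    omega
  · rw [Finset.disjoint_left]
    rintro l hl1 hl2
    obtain ⟨B, _, rfl⟩ := Finset.mem_image.mp hl1
    obtain ⟨a, _, hl3⟩ := Finset.mem_biUnion.mp hl2
    obtain ⟨⟨A', B'⟩, _, heqn⟩ := Finset.mem_image.mp hl3
    simp at heqn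

lemma sum_Ioc_shift (g : ℕ → ℕ) (m : ℕ) :
    ∑ a ∈ Finset.Ioc 0 m, g a = ∑ i ∈ Finset.range m, g (i + 1) := by
  rw [show Finset.Ioc 0 m = Finset.Ico 1 (m + 1) by ext x; simp; omega,
    Finset.sum_Ico_eq_sum_range]
  simp only [Nat.add_sub_cancel]
  exact Finset.sum_congr rfl fun i _ => by rw [add_comm]

lemma card_P_succ' (m : ℕ) :
    qS (m + 1) = qS m + ∑ i ∈ Finset.range m, rS (i + 1) * qS (m - 1 - i) := by
  rw [card_P_succ, sum_Ioc_shift]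
  congr 1
  exact Finset.sum_congr rfl fun i _ => by rw [show m - (i + 1) = m - 1 - i by omega]

lemma qS_one : qS 1 = 1 := by
  rw [card_P_succ' 0]
  simp [qS_zero]

lemma rq : ∀ m, 1 ≤ m → rS m = 2 * qS m := by
  intro m
  induction m using Nat.strong_induction_on with
  | _ m ih =>
    intro hm
    obtain ⟨k', rfl⟩ : ∃ k', m = k' + 1 := ⟨m - 1, by omega⟩
    rcases Nat.eq_zero_or_pos k' with rfl | hk
    · rw [card_S_succ 0, qS_one]
      simp [rS_zero]
    · obtain ⟨k, rfl⟩ : ∃ k, k' = k + 1 := ⟨k' - 1, by omega⟩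
      have hss2 : (∑ i ∈ Finset.range k, rS (i + 1) * rS (k + 1 - (i + 1))) =
          ∑ i ∈ Finset.range k, rS (i + 1) * rS (k - i) :=
        Finset.sum_congr rfl fun i _ => by rw [show k + 1 - (i + 1) = k - i by omega]
      have hr : rS (k + 2) = rS (k + 1) +
          ((∑ i ∈ Finset.range k, rS (i + 1) * rS (k - i)) + rS (k + 1) * rS 0 + rS 0 * rS (k + 1)) := by
        rw [card_S_succ (k + 1), Finset.sum_range_succ' _ (k + 1), Finset.sum_range_succ,
          hss2, Nat.sub_self, Nat.sub_zero]
      have hss : (∑ i ∈ Finset.range k, rS (i + 1) * qS (k + 1 - 1 - i)) =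
          ∑ i ∈ Finset.range k, rS (i + 1) * qS (k - i) :=
        Finset.sum_congr rfl fun i _ => by rw [show k + 1 - 1 - i = k - i by omega]
      have hq : qS (k + 2) = qS (k + 1) +
          ((∑ i ∈ Finset.range k, rS (i + 1) * qS (k - i)) + rS (k + 1) * qS 0) := by
        rw [card_P_succ' (k + 1), Finset.sum_range_succ, hss, show k + 1 - 1 - k = 0 by omega]
      have hsr : (∑ i ∈ Finset.range k, rS (i + 1) * rS (k - i)) =
          2 * ∑ i ∈ Finset.range k, rS (i + 1) * qS (k - i) := by
        rw [Finset.mul_sum]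
        refine Finset.sum_congr rfl fun i hi => ?_
        rw [Finset.mem_range] at hi
        rw [ih (k - i) (by omega) (by omega)]
        ring
      have hk1 : rS (k + 1) = 2 * qS (k + 1) := ih (k + 1) (by omega) (by omega)
      rw [rS_zero] at hr
      rw [qS_zero] at hq
      rw [hr, hq, hsr, hk1]
      ring
end SchroederAux

namespace SchroederAux
open Finset

lemma q_rec (n : ℕ) :
    qS (n + 2) = 3 * qS (n + 1) + 2 * ∑ i ∈ Finset.range n, qS (i + 1) * qS (n - i) := by
  have hss : (∑ i ∈ Finset.range (n + 1), rS (i + 1) * qS (n + 1 - 1 - i)) =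
      (∑ i ∈ Finset.range n, 2 * (qS (i + 1) * qS (n - i))) + 2 * qS (n + 1) := by
    rw [Finset.sum_range_succ]
    congr 1
    · refine Finset.sum_congr rfl fun i hi => ?_
      rw [show n + 1 - 1 - i = n - i by omega, rq (i + 1) (by omega)]
      ring
    · rw [show n + 1 - 1 - n = 0 by omega, qS_zero, rq (n + 1) (by omega)]
      ring
  rw [card_P_succ' (n + 1), hss, ← Finset.mul_sum]
  ring

lemma ls_eq (n : ℕ) : littleSchroeder n = qS (n + 1) := by
  have hset : ∀ l : List SStep, IsLittleSchroederPath (n + 1) l ↔ l ∈ P (n + 1) := by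
    intro l
    rw [mem_P]
    unfold IsLittleSchroederPath IsS IsPath NoPeak
    tauto
  calc littleSchroeder n
      = Nat.card {l : List SStep // l ∈ P (n + 1)} :=
        Nat.card_congr (Equiv.subtypeEquivRight hset)
    _ = (P (n + 1)).card := Nat.card_eq_finsetCard _
    _ = qS (n + 1) := rfl

end SchroederAux

/-- If `f = ∑ fₙ xⁿ` where `fₙ` is the total weight of `(3,2)`-Motzkin paths of length
`n`, and `f` satisfies `f = 1 + 3x f + 2x² f²`, then `f = (1-3x-√(1-6x+x²))/(4x²)`
(equivalently, `(1 - 3x - 4x² f)² = 1 - 6x + x²`), and `fₙ` is the `n`-th little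
Schröder number. -/
theorem stmt_6 (f : PowerSeries ℚ)
    (hf : ∀ n, PowerSeries.coeff n f = motzkinWt 3 2 n)
    (heq : f = 1 + 3 * PowerSeries.X * f + 2 * PowerSeries.X ^ 2 * f ^ 2) :
    (1 - 3 * PowerSeries.X - 4 * PowerSeries.X ^ 2 * f) ^ 2 =
        1 - 6 * PowerSeries.X + PowerSeries.X ^ 2 ∧
      ∀ n, motzkinWt 3 2 n = littleSchroeder n := by
  constructor
  · linear_combination (-(8 : PowerSeries ℚ) * PowerSeries.X ^ 2) * heq
  · have h3C : (3 : PowerSeries ℚ) = (PowerSeries.C (R := ℚ)) 3 := (map_ofNat ((PowerSeries.C (R := ℚ))) 3).symm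
    have h2C : (2 : PowerSeries ℚ) = (PowerSeries.C (R := ℚ)) 2 := (map_ofNat ((PowerSeries.C (R := ℚ))) 2).symm
    have hone : ∀ n : ℕ, PowerSeries.coeff (n + 1) (1 : PowerSeries ℚ) = 0 := by
      simp [PowerSeries.coeff_one]
    have hA : ∀ n, PowerSeries.coeff (n + 1) (3 * PowerSeries.X * f) =
        3 * PowerSeries.coeff n f := by
      intro n
      rw [h3C, mul_assoc, PowerSeries.coeff_C_mul, PowerSeries.coeff_succ_X_mul]
    have hB : ∀ n, PowerSeries.coeff (n + 2) (2 * PowerSeries.X ^ 2 * f ^ 2) =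
        2 * PowerSeries.coeff n (f ^ 2) := by
      intro n
      rw [h2C, mul_assoc, PowerSeries.coeff_C_mul, PowerSeries.coeff_X_pow_mul]
    have hB1 : PowerSeries.coeff 1 (2 * PowerSeries.X ^ 2 * f ^ 2) = 0 := by
      rw [h2C, mul_assoc, PowerSeries.coeff_C_mul, pow_two, mul_assoc,
        show (1 : ℕ) = 0 + 1 from rfl, PowerSeries.coeff_succ_X_mul]
      simp [PowerSeries.coeff_zero_eq_constantCoeff, map_mul]
    have h0 : motzkinWt 3 2 0 = 1 := by
      have hc := congrArg (PowerSeries.coeff 0) heq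
      rw [hf 0] at hc
      have hc2 : ((motzkinWt 3 2 0 : ℚ)) = 1 := by
        rw [hc]
        simp [PowerSeries.coeff_zero_eq_constantCoeff, map_add, map_mul, map_pow]
      exact_mod_cast hc2
    have h1 : (motzkinWt 3 2 1 : ℚ) = 3 * (motzkinWt 3 2 0 : ℚ) := by
      have hc := congrArg (PowerSeries.coeff 1) heq
      rw [map_add, map_add, hone 0, hA 0, hB1, hf 1, hf 0] at hc
      rw [hc]; ring
    have hrec : ∀ n, (motzkinWt 3 2 (n + 2) : ℚ) = 3 * motzkinWt 3 2 (n + 1) +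
        2 * ∑ i ∈ Finset.range (n + 1), (motzkinWt 3 2 i : ℚ) * motzkinWt 3 2 (n - i) := by
      intro n
      have hc := congrArg (PowerSeries.coeff (n + 2)) heq
      rw [map_add, map_add, hone (n + 1), hA (n + 1), hB n, hf, hf] at hc
      rw [pow_two, PowerSeries.coeff_mul,
        Finset.Nat.sum_antidiagonal_eq_sum_range_succ_mk] at hc
      simp only [hf] at hc
      rw [hc]; ring
    have main : ∀ n, motzkinWt 3 2 n = SchroederAux.qS (n + 1) := by
      intro n
      induction n using Nat.strong_induction_on with
      | _ n ih =>
        rcases n with - | n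
        · rw [h0, SchroederAux.qS_one]
        · rcases n with - | n
          · have hm1 : (motzkinWt 3 2 1 : ℚ) = 3 := by rw [h1, h0]; norm_num
            have hq2 : SchroederAux.qS 2 = 3 := by
              rw [SchroederAux.q_rec 0]
              simp [SchroederAux.qS_one]
            have : motzkinWt 3 2 1 = 3 := by exact_mod_cast hm1
            rw [this, hq2]
          · have hq : (SchroederAux.qS (n + 3) : ℚ) = 3 * SchroederAux.qS (n + 2) +
                2 * ∑ i ∈ Finset.range (n + 1),
                    (SchroederAux.qS (i + 1) : ℚ) * SchroederAux.qS (n + 1 - i) := by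
              have := SchroederAux.q_rec (n + 1)
              have := congrArg (Nat.cast : ℕ → ℚ) this
              push_cast at this
              exact this
            have hcast : (motzkinWt 3 2 (n + 2) : ℚ) = (SchroederAux.qS (n + 3) : ℚ) := by
              rw [hrec n, hq, ih (n + 1) (by omega)]
              congr 1
              rw [Finset.mul_sum, Finset.mul_sum]
              refine Finset.sum_congr rfl fun i hi => ?_
              rw [Finset.mem_range] at hi
              rw [ih i (by omega), ih (n - i) (by omega),
                show n - i + 1 = n + 1 - i by omega]
            exact_mod_cast hcast
    intro n
    rw [main n, SchroederAux.ls_eq]
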